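/- Let G be an infinite, locally finite, connected, claw-free graph, X a finite vertex set with G[X] connected, and 𝔖 a finite vertex set disjoint from X, minimal with the property that every ray starting in X meets 𝔖. Then G − 𝔖 has k ≥ 1 infinite components K₁, …, K_k, and 𝔖 is the disjoint union of sets S₁, …, S_k such that each Sᵢ is a minimal vertex separator of G and, for each i, every vertex of Sᵢ has a neighbour in K_j if and only if j = i. -/

import Mathlib

open SimpleGraph

/-- The claw `K_{1,3}`: vertex `0` is the centre, adjacent to `1`, `2`, `3`. -/
def claw : SimpleGraph (Fin 4) := SimpleGraph.fromRel (fun a _ => a = 0)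

/-- The paw: a triangle on `1, 2, 3` with pendant vertex `0` attached to `1`. -/
def paw : SimpleGraph (Fin 4) :=
  SimpleGraph.fromRel (fun a b => (a = 0 ∧ b = 1) ∨ (a ≠ 0 ∧ b ≠ 0))

/-- `G` is `H`-free: no induced subgraph of `G` is isomorphic to `H`.
(`H ↪g G` is a graph embedding, i.e. an isomorphism onto an induced subgraph.) -/
def HFree {W V : Type*} (H : SimpleGraph W) (G : SimpleGraph V) : Prop :=
  ¬ Nonempty (H ↪g G)

/-- `G` is 2-connected: at least 3 vertices, connected, and deleting any vertex
leaves it connected. -/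
def TwoConnected {V : Type*} (G : SimpleGraph V) : Prop :=
  (∃ a b c : V, a ≠ b ∧ a ≠ c ∧ b ≠ c) ∧ G.Connected ∧
    ∀ v : V, (G.induce {u | u ≠ v}).Connected

/-- The hypothesis that every induced paw of `G`, with pendant vertex `a₁` adjacent
precisely to the triangle vertex `a₀`, satisfies `φ(a₁,b₁)` or `φ(a₁,b₂)`:
`a₁` has a common neighbour outside the paw with `b₁` or with `b₂`. -/
def PawCondition {V : Type*} (G : SimpleGraph V) : Prop :=
  ∀ a₁ a₀ b₁ b₂ : V,
    G.Adj a₁ a₀ → G.Adj a₀ b₁ → G.Adj a₀ b₂ → G.Adj b₁ b₂ →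
    ¬ G.Adj a₁ b₁ → ¬ G.Adj a₁ b₂ → a₁ ≠ b₁ → a₁ ≠ b₂ →
    ∃ x, x ∉ ({a₁, a₀, b₁, b₂} : Set V) ∧ G.Adj x a₁ ∧ (G.Adj x b₁ ∨ G.Adj x b₂)

/-- A ray (one-way infinite path) in `G`, given by its sequence of vertices. -/
def IsRay {V : Type*} (G : SimpleGraph V) (f : ℕ → V) : Prop :=
  Function.Injective f ∧ ∀ n, G.Adj (f n) (f (n + 1))

/-- Two rays are equivalent (belong to the same end) if no finite vertex set
separates them. -/
def EndEquiv {V : Type*} (G : SimpleGraph V) (f g : ℕ → V) : Prop :=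
  ∀ S : Set V, S.Finite →
    ∃ (m n : ℕ) (p : G.Walk (f m) (g n)), ∀ x ∈ p.support, x ∉ S

/-- The ends of `G`, as equivalence classes of rays. -/
def Ends {V : Type*} (G : SimpleGraph V) : Type _ :=
  Quot (fun f g : {f : ℕ → V // IsRay G f} => EndEquiv G f.1 g.1)

/-- The edge cut `δ(X)`. -/
def edgeCut {V : Type*} (G : SimpleGraph V) (X : Set V) : Set (Sym2 V) :=
  {e | e ∈ G.edgeSet ∧ ∃ a b, e = s(a, b) ∧ a ∈ X ∧ b ∉ X}

/-- `G` has a Hamilton circle in its Freudenthal compactification `|G|`,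
expressed combinatorially: there is a spanning edge set `C` in which every
vertex has degree exactly `2` and which meets every finite cut of `G` in a
positive even number of edges (for locally finite connected `G` this
characterises edge sets whose closure in `|G|` is a circle through all
vertices). -/
def HasHamiltonCircle {V : Type*} (G : SimpleGraph V) : Prop :=
  ∃ C ⊆ G.edgeSet, (∀ v : V, {e ∈ C | v ∈ e}.ncard = 2) ∧
    ∀ X : Set V, X.Nonempty → Xᶜ.Nonempty → (edgeCut G X).Finite →
      (C ∩ edgeCut G X).Nonempty ∧ Even ((C ∩ edgeCut G X).ncard)

/-- The end represented by the ray `g` lies in the closure (in `|G|`) of the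
vertex set `M`: for every finite `S`, the component of `G - S` containing a
tail of `g` meets `M`. -/
def EndInClosure {V : Type*} (G : SimpleGraph V) (g : ℕ → V) (M : Set V) : Prop :=
  ∀ S : Set V, S.Finite → ∃ u ∈ M, ∃ N : ℕ, ∀ n ≥ N,
    ∃ p : G.Walk u (g n), ∀ x ∈ p.support, x ∉ S

/-- `S` is a vertex separator of `G`: `G - S` is disconnected. -/
def IsSeparator {V : Type*} (G : SimpleGraph V) (S : Set V) : Prop :=
  ∃ (u : V) (hu : u ∉ S) (v : V) (hv : v ∉ S),
    ¬ (G.induce {x | x ∉ S}).Reachable ⟨u, hu⟩ ⟨v, hv⟩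

/-- `S` is a minimal vertex separator of `G`. -/
def IsMinSeparator {V : Type*} (G : SimpleGraph V) (S : Set V) : Prop :=
  IsSeparator G S ∧ ∀ T ⊂ S, ¬ IsSeparator G T

/-- The `k`-blow-up of `G`: each vertex is replaced by a `k`-clique. -/
def blowup {V : Type*} (G : SimpleGraph V) (k : ℕ) : SimpleGraph (V × Fin k) where
  Adj x y := (x.1 = y.1 ∧ x.2 ≠ y.2) ∨ G.Adj x.1 y.1
  symm := by
    constructor
    rintro x y (⟨h1, h2⟩ | h)
    · exact Or.inl ⟨h1.symm, h2.symm⟩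
    · exact Or.inr h.symm
  loopless := by
    constructor
    rintro x (⟨_, h⟩ | h)
    · exact h rfl
    · exact G.loopless.irrefl _ h

section Lemmas
variable {V : Type} {G : SimpleGraph V}

lemma reachable_induce_of_walk {A : Set V} {u v : V} (p : G.Walk u v)
    (hp : ∀ x ∈ p.support, x ∈ A) :
    (G.induce A).Reachable ⟨u, hp u p.start_mem_support⟩ ⟨v, hp v p.end_mem_support⟩ := by
  induction p with
  | nil => exact Reachable.refl _
  | @cons a b c h q ih =>
    have hb : b ∈ A := hp b (by simp)
    have : (G.induce A).Adj ⟨a, hp a (by simp)⟩ ⟨b, hb⟩ := by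
      rw [comap_adj]; exact h
    exact (Adj.reachable this).trans (ih (fun x hx => hp x (by simp [hx])))

lemma walk_of_reachable_induce {A : Set V} {u v : A}
    (h : (G.induce A).Reachable u v) :
    ∃ p : G.Walk u.1 v.1, ∀ x ∈ p.support, x ∈ A := by
  obtain ⟨q⟩ := h
  refine ⟨q.map (Embedding.induce A).toHom, ?_⟩
  intro x hx
  have hx' : x ∈ (q.map (Embedding.induce A).toHom).support := hx
  rw [Walk.support_map, List.mem_map] at hx'
  obtain ⟨y, _, rfl⟩ := hx'
  exact y.2

-- transfer reachability from induce A to induce B when A ⊆ B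
lemma reach_mono {A B : Set V} (hAB : A ⊆ B) {u v : A} (h : (G.induce A).Reachable u v) :
    (G.induce B).Reachable ⟨u.1, hAB u.2⟩ ⟨v.1, hAB v.2⟩ := by
  obtain ⟨p, hp⟩ := walk_of_reachable_induce h
  exact reachable_induce_of_walk p (fun x hx => hAB (hp x hx))

def Avoid (H : SimpleGraph V) (u : V) (P : Set V) : Set V :=
  {x | ∃ q : H.Walk u x, ∀ y ∈ q.support, y ∉ P}

lemma avoid_step {W : Type*} {H : SimpleGraph W} (hlf : ∀ v : W, (H.neighborSet v).Finite)
    {u : W} {P : Set W} (h : ({x | ∃ q : H.Walk u x, ∀ y ∈ q.support, y ∉ P}).Infinite) :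
    ∃ u', H.Adj u u' ∧ u' ∉ insert u P ∧
      ({x | ∃ q : H.Walk u' x, ∀ y ∈ q.support, y ∉ insert u P}).Infinite := by
  classical
  have hsub : {x | ∃ q : H.Walk u x, ∀ y ∈ q.support, y ∉ P} ⊆
      insert u (⋃ w ∈ H.neighborSet u, {x | ∃ q : H.Walk w x, ∀ y ∈ q.support, y ∉ insert u P}) := by
    rintro x ⟨q, hq⟩
    by_cases hx : x = u
    · subst hx; exact Set.mem_insert _ _
    · have hr : (q.bypass).IsPath := Walk.bypass_isPath q
      have hrs : ∀ y ∈ q.bypass.support, y ∉ P :=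
        fun y hy => hq y (Walk.support_bypass_subset q hy)
      right
      cases hb : q.bypass with
      | nil => exact absurd rfl hx
      | cons hadj r =>
        rw [hb] at hr hrs
        rw [Walk.cons_isPath_iff] at hr
        refine Set.mem_biUnion hadj ⟨r, ?_⟩
        intro y hy
        simp only [Set.mem_insert_iff]
        push_neg
        exact ⟨fun hyu => hr.2 (hyu ▸ hy), hrs y (by simp [hy])⟩
  by_contra hcon
  push_neg at hcon
  have : (insert u (⋃ w ∈ H.neighborSet u,
      {x | ∃ q : H.Walk w x, ∀ y ∈ q.support, y ∉ insert u P})).Finite := by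
    refine Set.Finite.insert _ (Set.Finite.biUnion (hlf u) ?_)
    intro w hw
    by_contra hinf
    have hinf : ({x | ∃ q : H.Walk w x, ∀ y ∈ q.support, y ∉ insert u P}).Infinite := hinf
    have hwn : w ∉ insert u P := by
      obtain ⟨x, q, hq⟩ := hinf.nonempty
      exact hq w q.start_mem_support
    exact hinf (hcon w hw hwn)
  exact h (this.subset hsub)

lemma exists_ray_aux {W : Type*} {H : SimpleGraph W} (hlf : ∀ v : W, (H.neighborSet v).Finite)
    {w : W} (h : {x | H.Reachable w x}.Infinite) :
    ∃ f : ℕ → W, Function.Injective f ∧ (∀ n, H.Adj (f n) (f (n + 1))) ∧ f 0 = w := by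
  classical
  set Inv : W × Set W → Prop := fun p =>
    p.1 ∉ p.2 ∧ ({x | ∃ q : H.Walk p.1 x, ∀ y ∈ q.support, y ∉ p.2}).Infinite with hInv
  have hbase : Inv (w, ∅) := by
    constructor
    · simp
    · refine h.mono ?_
      rintro x hx
      obtain ⟨q⟩ := hx
      exact ⟨q, by simp⟩
  have hstep : ∀ s : {p // Inv p}, ∃ u', H.Adj s.1.1 u' ∧ Inv (u', insert s.1.1 s.1.2) := by
    rintro ⟨⟨u, P⟩, _, hinf⟩
    obtain ⟨u', ha, hmem, hi⟩ := avoid_step hlf hinf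
    exact ⟨u', ha, hmem, hi⟩
  let F : {p // Inv p} → {p // Inv p} := fun s =>
    ⟨((hstep s).choose, insert s.1.1 s.1.2), (hstep s).choose_spec.2⟩
  let g : ℕ → {p // Inv p} := fun n => F^[n] ⟨(w, ∅), hbase⟩
  have hgsucc : ∀ n, g (n + 1) = F (g n) := fun n => Function.iterate_succ_apply' F n _
  have hgadj : ∀ n, H.Adj (g n).1.1 (g (n + 1)).1.1 := by
    intro n; rw [hgsucc]; exact (hstep (g n)).choose_spec.1
  have hgP : ∀ n, (g (n + 1)).1.2 = insert (g n).1.1 (g n).1.2 := by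
    intro n; rw [hgsucc]
  have hmono : ∀ m n, m ≤ n → (g m).1.2 ⊆ (g n).1.2 := by
    intro m n hmn
    induction n with
    | zero => simp_all
    | succ k ih =>
      rcases Nat.lt_or_ge m (k+1) with hl | hg
      · rw [hgP k]; exact (ih (Nat.lt_succ_iff.mp hl)).trans (Set.subset_insert _ _)
      · have : m = k + 1 := le_antisymm hmn hg
        subst this; rfl
  have hmemP : ∀ m n, m < n → (g m).1.1 ∈ (g n).1.2 := by
    intro m n hmn
    have : (g m).1.1 ∈ (g (m+1)).1.2 := by rw [hgP m]; exact Set.mem_insert _ _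
    exact hmono (m+1) n hmn this
  refine ⟨fun n => (g n).1.1, ?_, hgadj, rfl⟩
  intro m n hmn
  have hmn' : (g m).1.1 = (g n).1.1 := hmn
  by_contra hne
  rcases Ne.lt_or_gt hne with hl | hl
  · have := hmemP m n hl; rw [hmn'] at this; exact (g n).2.1 this
  · have := hmemP n m hl; rw [← hmn'] at this; exact (g m).2.1 this

lemma claw_far {s a b c : V} (hclaw : HFree claw G)
    (hsa : G.Adj s a) (hsb : G.Adj s b) (hsc : G.Adj s c)
    (hab : ¬G.Adj a b) (hac : ¬G.Adj a c) (hbc : ¬G.Adj b c)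
    (hab' : a ≠ b) (hac' : a ≠ c) (hbc' : b ≠ c) : False := by
  have hba : ¬G.Adj b a := fun h => hab h.symm
  have hca : ¬G.Adj c a := fun h => hac h.symm
  have hcb : ¬G.Adj c b := fun h => hbc h.symm
  apply hclaw
  refine ⟨⟨⟨![s, a, b, c], ?_⟩, ?_⟩⟩
  · intro x y hxy
    fin_cases x <;> fin_cases y <;>
      simp_all [hsa.ne, hsb.ne, hsc.ne] <;> simp_all [eq_comm]
  · intro x y
    show G.Adj (![s, a, b, c] x) (![s, a, b, c] y) ↔ _
    fin_cases x <;> fin_cases y <;>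
      simp [claw, fromRel_adj, hsa, hsb, hsc, hab, hac, hbc, hba, hca, hcb,
        hsa.symm, hsb.symm, hsc.symm, G.irrefl]

lemma first_crossing {𝔖 : Set V} {u v : V} (p : G.Walk u v) :
    ∀ (hu : u ∉ 𝔖), v ∈ 𝔖 →
    ∃ (a : V) (ha : a ∉ 𝔖) (b : V), G.Adj a b ∧ b ∈ 𝔖 ∧
      (G.induce {x | x ∉ 𝔖}).Reachable ⟨u, hu⟩ ⟨a, ha⟩ := by
  induction p with
  | nil => exact fun hu hv => absurd hv hu
  | @cons x y z h q ih =>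
    intro hu hv
    by_cases hy : y ∈ 𝔖
    · exact ⟨x, hu, y, h, hy, Reachable.refl _⟩
    · obtain ⟨a, ha, b, hab, hb, hr⟩ := ih hy hv
      have : (G.induce {x | x ∉ 𝔖}).Adj ⟨x, hu⟩ ⟨y, hy⟩ := by rw [comap_adj]; exact h
      exact ⟨a, ha, b, hab, hb, (Adj.reachable this).trans hr⟩

lemma walk_stay {𝔖 T : Set V} {Ki : (G.induce {x | x ∉ 𝔖}).ConnectedComponent}
    (hT : ∀ y ∈ 𝔖, (∃ (a : V) (ha : a ∉ 𝔖), G.Adj y a ∧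
      (G.induce {x | x ∉ 𝔖}).connectedComponentMk ⟨a, ha⟩ = Ki) → y ∈ T) :
    ∀ {u v : V} (p : G.Walk u v), (∀ x ∈ p.support, x ∉ T) → ∀ (hu : u ∉ 𝔖),
      (G.induce {x | x ∉ 𝔖}).connectedComponentMk ⟨u, hu⟩ = Ki →
      ∃ hv : v ∉ 𝔖, (G.induce {x | x ∉ 𝔖}).connectedComponentMk ⟨v, hv⟩ = Ki := by
  intro u v p
  induction p with
  | nil => exact fun _ hu hKi => ⟨hu, hKi⟩
  | @cons x y z h q ih =>
    intro hsup hu hKi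
    have hy𝔖 : y ∉ 𝔖 := by
      intro hy
      exact hsup y (by simp) (hT y hy ⟨x, hu, h.symm, hKi⟩)
    have hadj : (G.induce {x | x ∉ 𝔖}).Adj ⟨x, hu⟩ ⟨y, hy𝔖⟩ := by rw [comap_adj]; exact h
    have : (G.induce {x | x ∉ 𝔖}).connectedComponentMk ⟨y, hy𝔖⟩ = Ki := by
      rw [← hKi]; exact (ConnectedComponent.sound hadj.reachable.symm)
    exact ih (fun a ha => hsup a (by simp [ha])) hy𝔖 this

lemma chain_reach {A : Set V} (f : ℕ → V) (hadj : ∀ n, G.Adj (f n) (f (n + 1)))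
    (n m : ℕ) (h : n ≤ m) (hA : ∀ i, n ≤ i → i ≤ m → f i ∈ A) :
    (G.induce A).Reachable ⟨f n, hA n le_rfl h⟩ ⟨f m, hA m h le_rfl⟩ := by
  induction h with
  | refl => rfl
  | @step m hm ih =>
    refine Reachable.trans (ih ?_) (Adj.reachable ?_)
    · exact fun i h1 h2 => hA i h1 (h2.trans (Nat.le_succ m))
    · rw [comap_adj]; exact hadj m

end Lemmas

/-- if `𝔖` is an `X`-umbrella, then `G − 𝔖` has `k ≥ 1` infinite
components `K₁, …, K_k` and `𝔖` is a disjoint union of minimal vertex separators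
`S₁, …, S_k` such that every vertex of `Sᵢ` has a neighbour in `K_j` iff `j = i`. -/


theorem stmt_12 {V : Type} [Infinite V] (G : SimpleGraph V)
    (hlf : ∀ v : V, (G.neighborSet v).Finite) (hconn : G.Connected)
    (hclaw : HFree claw G) (X : Set V) (hX : X.Finite) (hXne : X.Nonempty)
    (hXconn : (G.induce X).Connected) (𝔖 : Set V) (h𝔖fin : 𝔖.Finite)
    (hdisj : Disjoint X 𝔖)
    (hmeets : ∀ f : ℕ → V, IsRay G f → f 0 ∈ X → ∃ n, f n ∈ 𝔖)
    (hmin : ∀ T ⊂ 𝔖, ¬ ∀ f : ℕ → V, IsRay G f → f 0 ∈ X → ∃ n, f n ∈ T) :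
    ∃ (k : ℕ), 1 ≤ k ∧
      ∃ K : Fin k → (G.induce {x | x ∉ 𝔖}).ConnectedComponent,
        Function.Injective K ∧ (∀ i, (K i).supp.Infinite) ∧
        (∀ K' : (G.induce {x | x ∉ 𝔖}).ConnectedComponent,
          K'.supp.Infinite → ∃ i, K' = K i) ∧
        ∃ S : Fin k → Set V,
          (⋃ i, S i) = 𝔖 ∧
          (∀ i j, i ≠ j → Disjoint (S i) (S j)) ∧
          (∀ i, IsMinSeparator G (S i)) ∧
          (∀ i, ∀ s ∈ S i, ∀ j : Fin k,
            ((∃ y, G.Adj s y ∧ ∃ hy : y ∉ 𝔖,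
              (G.induce {x | x ∉ 𝔖}).connectedComponentMk ⟨y, hy⟩ = K j) ↔ j = i)) := by
  classical
  set A : Set V := {x | x ∉ 𝔖} with hA
  set GA := G.induce A with hGA
  set mk : A → GA.ConnectedComponent := GA.connectedComponentMk with hmk
  -- local finiteness of GA
  have hlfA : ∀ v : A, (GA.neighborSet v).Finite := by
    intro v
    have : GA.neighborSet v ⊆ Subtype.val ⁻¹' (G.neighborSet v.1) := by
      intro w hw
      exact hw
    exact ((hlf v.1).preimage (Subtype.val_injective.injOn)).subset this
  -- nonadjacency across components
  have hnadj : ∀ (a b : V) (ha : a ∉ 𝔖) (hb : b ∉ 𝔖),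
      mk ⟨a, ha⟩ ≠ mk ⟨b, hb⟩ → ¬ G.Adj a b := by
    intro a b ha hb hne hadj
    exact hne (ConnectedComponent.sound (by rw [comap_adj]; exact hadj : GA.Adj ⟨a, ha⟩ ⟨b, hb⟩).reachable)
  -- rays inside infinite components
  have hrayA : ∀ v : A, (mk v).supp.Infinite →
      ∃ f : ℕ → V, IsRay G f ∧ f 0 = v.1 ∧ ∀ n, f n ∉ 𝔖 := by
    intro v hinf
    have hre : {x : A | GA.Reachable v x}.Infinite := by
      refine hinf.mono ?_
      intro x hx
      rw [ConnectedComponent.mem_supp_iff] at hx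
      exact (ConnectedComponent.exact hx).symm
    obtain ⟨f, hfi, hfa, hf0⟩ := exists_ray_aux hlfA hre
    refine ⟨fun n => (f n).1, ⟨Subtype.val_injective.comp hfi, ?_⟩,
      congrArg Subtype.val hf0, fun n => (f n).2⟩
    intro n
    have := hfa n
    rwa [comap_adj] at this
  -- 𝔖 is nonempty
  obtain ⟨x0, hx0X⟩ := hXne
  have hx0𝔖 : x0 ∉ 𝔖 := fun h => (Set.disjoint_left.mp hdisj hx0X) h
  have h𝔖ne : 𝔖.Nonempty := by
    have hre : {x : V | G.Reachable x0 x}.Infinite := by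
      have : {x : V | G.Reachable x0 x} = Set.univ := by
        ext x; simp [hconn.preconnected x0 x]
      rw [this]; exact Set.infinite_univ
    obtain ⟨f, hfi, hfa, hf0⟩ := exists_ray_aux hlf hre
    obtain ⟨n, hn⟩ := hmeets f ⟨hfi, hfa⟩ (hf0 ▸ hx0X)
    exact ⟨f n, hn⟩
  -- the component of X
  set C0 := mk ⟨x0, hx0𝔖⟩ with hC0
  have hXC0 : ∀ x ∈ X, ∀ (hx : x ∉ 𝔖), mk ⟨x, hx⟩ = C0 := by
    intro x hxX hx
    have hr : (G.induce X).Reachable ⟨x, hxX⟩ ⟨x0, hx0X⟩ := hXconn.preconnected _ _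
    have hXA : X ⊆ A := fun y hy => Set.disjoint_left.mp hdisj hy
    have := reach_mono hXA hr
    exact ConnectedComponent.sound this
  -- C0 is finite
  have hC0fin : C0.supp.Finite := by
    by_contra hinf
    have hinf : C0.supp.Infinite := hinf
    obtain ⟨f, hf, hf0, hfn⟩ := hrayA ⟨x0, hx0𝔖⟩ hinf
    obtain ⟨n, hn⟩ := hmeets f hf (hf0 ▸ hx0X)
    exact hfn n hn
  -- for each s ∈ 𝔖: a neighbour in C0 and a neighbour in some infinite component
  have hSdata : ∀ s ∈ 𝔖, ∃ (a : V) (ha : a ∉ 𝔖) (b : V) (hb : b ∉ 𝔖),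
      G.Adj s a ∧ G.Adj s b ∧ mk ⟨a, ha⟩ = C0 ∧ (mk ⟨b, hb⟩).supp.Infinite := by
    intro s hs
    have hss : 𝔖 \ {s} ⊂ 𝔖 := by
      constructor
      · exact Set.diff_subset
      · intro hsub
        exact (hsub hs).2 rfl
    obtain ⟨f, hf, hf0, hfT⟩ := by
      have := hmin (𝔖 \ {s}) hss
      push_neg at this
      exact this
    obtain ⟨n0, hn0⟩ := hmeets f hf hf0
    have hfs : ∀ m, f m ∈ 𝔖 → m = n0 := by
      intro m hm
      have h1 : f m = s := by
        have := hfT m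
        simp only [Set.mem_diff, Set.mem_singleton_iff, not_and, not_not] at this
        exact this hm
      have h2 : f n0 = s := by
        have := hfT n0
        simp only [Set.mem_diff, Set.mem_singleton_iff, not_and, not_not] at this
        exact this hn0
      exact hf.1 (h1.trans h2.symm)
    have hn0pos : n0 ≠ 0 := by
      intro h
      rw [h] at hn0
      exact (Set.disjoint_left.mp hdisj hf0) hn0
    obtain ⟨m0, rfl⟩ := Nat.exists_eq_succ_of_ne_zero hn0pos
    have hfnot : ∀ i, i ≠ m0 + 1 → f i ∉ 𝔖 := fun i hi h => hi (hfs i h)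
    have hfseq : f (m0 + 1) = s := by
      have := hfT (m0 + 1)
      simp only [Set.mem_diff, Set.mem_singleton_iff, not_and, not_not] at this
      exact this hn0
    refine ⟨f m0, hfnot m0 (by omega), f (m0 + 2), hfnot (m0 + 2) (by omega), ?_, ?_, ?_, ?_⟩
    · rw [← hfseq]; exact (hf.2 m0).symm
    · rw [← hfseq]; exact hf.2 (m0 + 1)
    · have hmem : ∀ i, 0 ≤ i → i ≤ m0 → f i ∈ A := fun i _ h2 => hfnot i (by omega)
      have := chain_reach (G := G) f hf.2 0 m0 (Nat.zero_le _) hmem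
      have h0 : mk ⟨f 0, hmem 0 le_rfl (Nat.zero_le _)⟩ = C0 := hXC0 (f 0) hf0 _
      rw [← h0]
      exact (ConnectedComponent.sound this).symm
    · have hmem : ∀ j : ℕ, f (m0 + 2 + j) ∈ A := fun j => hfnot _ (by omega)
      refine Set.infinite_of_injective_forall_mem
        (f := fun j : ℕ => (⟨f (m0 + 2 + j), hmem j⟩ : A)) ?_ ?_
      · intro i j hij
        have : f (m0 + 2 + i) = f (m0 + 2 + j) := congrArg Subtype.val hij
        have := hf.1 this
        omega
      · intro j
        rw [ConnectedComponent.mem_supp_iff]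
        have hmem' : ∀ i, m0 + 2 ≤ i → i ≤ m0 + 2 + j → f i ∈ A := fun i h1 _ =>
          hfnot i (by omega)
        have := chain_reach (G := G) f hf.2 (m0 + 2) (m0 + 2 + j) (by omega) hmem'
        exact (ConnectedComponent.sound this).symm
  -- each neighbour-component of s ∈ 𝔖 is C0 or infinite
  have hNBR1 : ∀ s ∈ 𝔖, ∀ (c : V) (hc : c ∉ 𝔖), G.Adj s c →
      mk ⟨c, hc⟩ = C0 ∨ (mk ⟨c, hc⟩).supp.Infinite := by
    intro s hs c hc hsc
    obtain ⟨a, ha, b, hb, hsa, hsb, haC0, hbinf⟩ := hSdata s hs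
    by_contra hcon
    push_neg at hcon
    obtain ⟨hc1, hc2⟩ := hcon
    have hab : mk ⟨a, ha⟩ ≠ mk ⟨b, hb⟩ := by
      rw [haC0]; intro h; rw [← h] at hbinf; exact hbinf hC0fin
    have hac : mk ⟨a, ha⟩ ≠ mk ⟨c, hc⟩ := by rw [haC0]; exact fun h => hc1 h.symm
    have hbc : mk ⟨b, hb⟩ ≠ mk ⟨c, hc⟩ := by
      intro h; rw [h] at hbinf; exact hbinf hc2
    have hne1 : a ≠ b := fun h => hab (by subst h; rfl)
    have hne2 : a ≠ c := fun h => hac (by subst h; rfl)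
    have hne3 : b ≠ c := fun h => hbc (by subst h; rfl)
    exact claw_far hclaw hsa hsb hsc (hnadj a b ha hb hab) (hnadj a c ha hc hac)
      (hnadj b c hb hc hbc) hne1 hne2 hne3
  -- s has at most one infinite neighbour-component
  have hNBR2 : ∀ s ∈ 𝔖, ∀ (c : V) (hc : c ∉ 𝔖) (c' : V) (hc' : c' ∉ 𝔖),
      G.Adj s c → G.Adj s c' → (mk ⟨c, hc⟩).supp.Infinite → (mk ⟨c', hc'⟩).supp.Infinite →
      mk ⟨c, hc⟩ = mk ⟨c', hc'⟩ := by
    intro s hs c hc c' hc' hsc hsc' hcinf hcinf'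
    by_contra hne
    obtain ⟨a, ha, b, hb, hsa, hsb, haC0, hbinf⟩ := hSdata s hs
    have hac : mk ⟨a, ha⟩ ≠ mk ⟨c, hc⟩ := by
      rw [haC0]; intro h; rw [← h] at hcinf; exact hcinf hC0fin
    have hac' : mk ⟨a, ha⟩ ≠ mk ⟨c', hc'⟩ := by
      rw [haC0]; intro h; rw [← h] at hcinf'; exact hcinf' hC0fin
    have hne1 : a ≠ c := fun h => hac (by subst h; rfl)
    have hne2 : a ≠ c' := fun h => hac' (by subst h; rfl)
    have hne3 : c ≠ c' := fun h => hne (by subst h; rfl)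
    exact claw_far hclaw hsa hsc hsc' (hnadj a c ha hc hac) (hnadj a c' ha hc' hac')
      (hnadj c c' hc hc' hne) hne1 hne2 hne3
  -- boundary: every component has a neighbour in 𝔖
  have hbound : ∀ K : GA.ConnectedComponent, ∃ s ∈ 𝔖, ∃ (a : V) (ha : a ∉ 𝔖),
      G.Adj s a ∧ mk ⟨a, ha⟩ = K := by
    intro K
    obtain ⟨u, huK⟩ := K.exists_rep
    obtain ⟨s0, hs0⟩ := h𝔖ne
    obtain ⟨p⟩ := hconn.preconnected u.1 s0
    obtain ⟨a, ha, b, hab, hb, hr⟩ := first_crossing p u.2 hs0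
    refine ⟨b, hb, a, ha, hab.symm, ?_⟩
    rw [← huK]
    exact (ConnectedComponent.sound hr).symm
  -- the set of infinite components is finite and nonempty
  set IC : Set GA.ConnectedComponent := {K | K.supp.Infinite} with hIC
  have hICne : IC.Nonempty := by
    obtain ⟨s, hs⟩ := h𝔖ne
    obtain ⟨a, ha, b, hb, hsa, hsb, haC0, hbinf⟩ := hSdata s hs
    exact ⟨mk ⟨b, hb⟩, hbinf⟩
  have hICfin : IC.Finite := by
    have hφ : ∀ K : IC, ∃ s ∈ 𝔖, ∃ (a : V) (ha : a ∉ 𝔖), G.Adj s a ∧ mk ⟨a, ha⟩ = K.1 :=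
      fun K => hbound K.1
    choose φ hφ𝔖 aa haa hφadj hφmk using hφ
    haveI : Finite ↥𝔖 := h𝔖fin.to_subtype
    have hinj : Function.Injective (fun K : IC => (⟨φ K, hφ𝔖 K⟩ : ↥𝔖)) := by
      intro K1 K2 h12
      have h12 : φ K1 = φ K2 := congrArg Subtype.val h12
      apply Subtype.ext
      rw [← hφmk K1, ← hφmk K2]
      refine hNBR2 (φ K1) (hφ𝔖 K1) (aa K1) (haa K1) (aa K2) (haa K2) (hφadj K1)
        (h12 ▸ hφadj K2) ?_ ?_
      · rw [hφmk K1]; exact K1.2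
      · rw [hφmk K2]; exact K2.2
    have : Finite ↥IC := Finite.of_injective _ hinj
    exact Set.finite_coe_iff.mp this
  haveI : Fintype ↥IC := hICfin.fintype
  haveI : Nonempty ↥IC := hICne.to_subtype
  set k := Fintype.card ↥IC with hk
  have hk1 : 1 ≤ k := Fintype.card_pos
  set e : ↥IC ≃ Fin k := Fintype.equivFin ↥IC with he
  set K : Fin k → GA.ConnectedComponent := fun i => (e.symm i).1 with hK
  have hKinj : Function.Injective K :=
    fun i j h => e.symm.injective (Subtype.ext h)
  have hKinf : ∀ i, (K i).supp.Infinite := fun i => (e.symm i).2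
  have hKsurj : ∀ K' : GA.ConnectedComponent, K'.supp.Infinite → ∃ i, K' = K i := by
    intro K' h
    refine ⟨e ⟨K', h⟩, ?_⟩
    rw [hK]
    simp
  -- the sets S i
  set S : Fin k → Set V := fun i =>
    {s | s ∈ 𝔖 ∧ ∃ y, G.Adj s y ∧ ∃ hy : y ∉ 𝔖, mk ⟨y, hy⟩ = K i} with hS
  -- membership in S i forces the infinite neighbour component to be K i
  have hSunique : ∀ i, ∀ s ∈ S i, ∀ (y : V) (hy : y ∉ 𝔖), G.Adj s y →
      (mk ⟨y, hy⟩).supp.Infinite → mk ⟨y, hy⟩ = K i := by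
    intro i s hsi y hy hadj hyinf
    obtain ⟨hs𝔖, y', hadj', hy', hy'K⟩ := hsi
    rw [← hy'K]
    refine hNBR2 s hs𝔖 y hy y' hy' hadj hadj' hyinf ?_
    rw [hy'K]; exact hKinf i
  refine ⟨k, hk1, K, hKinj, hKinf, hKsurj, S, ?_, ?_, ?_, ?_⟩
  · -- union
    apply Set.eq_of_subset_of_subset
    · intro s hs
      obtain ⟨i, hi⟩ := Set.mem_iUnion.mp hs
      exact hi.1
    · intro s hs
      obtain ⟨a, ha, b, hb, hsa, hsb, haC0, hbinf⟩ := hSdata s hs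
      obtain ⟨i, hi⟩ := hKsurj _ hbinf
      exact Set.mem_iUnion.mpr ⟨i, hs, b, hsb, hb, hi⟩
  · -- disjoint
    intro i j hij
    rw [Set.disjoint_left]
    intro s hsi hsj
    apply hij
    apply hKinj
    obtain ⟨hs𝔖, y, hadj, hy, hyK⟩ := hsi
    have h1 : mk ⟨y, hy⟩ = K j := hSunique j s hsj y hy hadj (hyK ▸ hKinf i)
    rw [← hyK, h1]
  · -- minimal separator
    intro i
    constructor
    · -- separator
      obtain ⟨u, hu⟩ := (hKinf i).nonempty
      rw [ConnectedComponent.mem_supp_iff] at hu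
      have huS : u.1 ∉ S i := fun h => u.2 h.1
      have hx0S : x0 ∉ S i := fun h => hx0𝔖 h.1
      refine ⟨u.1, huS, x0, hx0S, ?_⟩
      intro hre
      obtain ⟨p, hp⟩ := walk_of_reachable_induce hre
      have hT : ∀ y ∈ 𝔖, (∃ (a : V) (ha : a ∉ 𝔖), G.Adj y a ∧
          mk ⟨a, ha⟩ = K i) → y ∈ S i := by
        rintro y hy ⟨a, ha, hadj, hmk⟩
        exact ⟨hy, a, hadj, ha, hmk⟩
      obtain ⟨hv, hvK⟩ := walk_stay hT p (fun x hx => hp x hx) u.2 hu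
      have : C0 = K i := by rw [← hXC0 x0 hx0X hv]; exact hvK
      exact (hKinf i) (this ▸ hC0fin)
    · -- minimality
      intro T hT hsep
      obtain ⟨s, hsSi, hsT⟩ := Set.exists_of_ssubset hT
      have hT𝔖 : T ⊆ 𝔖 := fun t ht => (hT.1 ht).1
      have hA_T : A ⊆ {x | x ∉ T} := fun y hy h => hy (hT𝔖 h)
      have hx0T : x0 ∉ T := fun h => hx0𝔖 (hT𝔖 h)
      -- reach x0 from any component vertex whose component is C0
      have hreachC0 : ∀ (z : V) (hz : z ∉ 𝔖), mk ⟨z, hz⟩ = C0 →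
          (G.induce {x | x ∉ T}).Reachable ⟨z, fun h => hz (hT𝔖 h)⟩ ⟨x0, hx0T⟩ := by
        intro z hz hzC0
        have : GA.Reachable ⟨z, hz⟩ ⟨x0, hx0𝔖⟩ := ConnectedComponent.exact hzC0
        exact reach_mono hA_T this
      -- reach x0 from any 𝔖-vertex not in T
      have hreach𝔖 : ∀ s' ∈ 𝔖, ∀ (hs'T : s' ∉ T),
          (G.induce {x | x ∉ T}).Reachable ⟨s', hs'T⟩ ⟨x0, hx0T⟩ := by
        intro s' hs' hs'T
        obtain ⟨a, ha, b, hb, hsa, hsb, haC0, hbinf⟩ := hSdata s' hs'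
        have haT : a ∉ T := fun h => ha (hT𝔖 h)
        have hadj : (G.induce {x | x ∉ T}).Adj ⟨s', hs'T⟩ ⟨a, haT⟩ := by
          rw [comap_adj]; exact hsa
        exact hadj.reachable.trans (hreachC0 a ha haC0)
      -- reach x0 from everything
      have hreach : ∀ (z : V) (hzT : z ∉ T),
          (G.induce {x | x ∉ T}).Reachable ⟨z, hzT⟩ ⟨x0, hx0T⟩ := by
        intro z hzT
        by_cases hz𝔖 : z ∈ 𝔖
        · exact hreach𝔖 z hz𝔖 hzT
        · have hzcase : mk ⟨z, hz𝔖⟩ = C0 ∨ (mk ⟨z, hz𝔖⟩).supp.Infinite := by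
            obtain ⟨s'', hs''𝔖, a'', ha'', hadj'', hmk''⟩ := hbound (mk ⟨z, hz𝔖⟩)
            have h' := hNBR1 s'' hs''𝔖 a'' ha'' hadj''
            rw [hmk''] at h'
            exact h'
          rcases hzcase with hzC0 | hzinf
          · exact hreachC0 z hz𝔖 hzC0
          · obtain ⟨j, hj⟩ := hKsurj _ hzinf
            -- find s' ∈ S j with s' ∉ T and a neighbour y' in K j
            obtain ⟨s', hs'𝔖, y', hy'𝔖, hadj', hy'K, hs'T⟩ :
                ∃ (s' : V), s' ∈ 𝔖 ∧ ∃ (y' : V) (hy'𝔖 : y' ∉ 𝔖), G.Adj s' y' ∧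
                  mk ⟨y', hy'𝔖⟩ = K j ∧ s' ∉ T := by
              by_cases hji : j = i
              · subst hji
                obtain ⟨hs𝔖, y, hadj, hy, hyK⟩ := hsSi
                exact ⟨s, hs𝔖, y, hy, hadj, hyK, hsT⟩
              · obtain ⟨s'', hs''𝔖, a'', ha'', hadj'', hmk''⟩ := hbound (K j)
                refine ⟨s'', hs''𝔖, a'', ha'', hadj'', hmk'', ?_⟩
                intro hs''T
                have hs''Si : s'' ∈ S i := hT.1 hs''T
                have : mk ⟨a'', ha''⟩ = K i :=
                  hSunique i s'' hs''Si a'' ha'' hadj'' (hmk'' ▸ hKinf j)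
                exact hji (hKinj (by rw [← hmk'', this]))
            -- z reachable to y' within component (avoiding 𝔖 hence T)
            have hzy' : GA.Reachable ⟨z, hz𝔖⟩ ⟨y', hy'𝔖⟩ := by
              exact ConnectedComponent.exact (hj.trans hy'K.symm)
            have h1 : (G.induce {x | x ∉ T}).Reachable ⟨z, hzT⟩
                ⟨y', fun h => hy'𝔖 (hT𝔖 h)⟩ := reach_mono hA_T hzy'
            have h2 : (G.induce {x | x ∉ T}).Adj ⟨y', fun h => hy'𝔖 (hT𝔖 h)⟩
                ⟨s', hs'T⟩ := by rw [comap_adj]; exact hadj'.symm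
            exact (h1.trans h2.reachable).trans (hreach𝔖 s' hs'𝔖 hs'T)
      obtain ⟨u, hu, v, hv, hnr⟩ := hsep
      exact hnr ((hreach u hu).trans (hreach v hv).symm)
  · -- neighbourhood characterisation
    intro i s hsi j
    constructor
    · rintro ⟨y, hadj, hy, hyK⟩
      apply hKinj
      rw [← hyK]
      exact hSunique i s hsi y hy hadj (hyK ▸ hKinf j)
    · rintro rfl
      obtain ⟨hs𝔖, y, hadj, hy, hyK⟩ := hsi
      exact ⟨y, hadj, hy, hyK⟩
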